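/- arXiv:2207.07755 — 6 statements merged into one kernel-verified Lean document; each statement's English description precedes it below -/
import Mathlib

section
/- If nonnegative continuous functions v_1,...,v_N on [t_0,∞) satisfy v_k(t) ≤ D₁ k ∫_{t_0}^t e^{D₁ k (t-s)} (∑_{l=k+1}^N v_l(s) + 1) ds for all t ≥ t_0 and 1 ≤ k ≤ N, then for every 0 ≤ n ≤ N-2 and all t ≥ t_0, v_{N-n}(t) + v_{N-n+1}(t) + ... + v_N(t) + 1 ≤ (N^n / n!) e^{D₁ N (t - t_0)}. -/
open intervalIntegral Real

lemma int_exp' (c a b : ℝ) (hc : c ≠ 0) :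
    ∫ s in a..b, Real.exp (c * s) = (Real.exp (c * b) - Real.exp (c * a)) / c := by
  rw [intervalIntegral.integral_comp_mul_left (fun x => Real.exp x) hc, integral_exp]
  simp [smul_eq_mul, div_eq_inv_mul]

lemma helper_int (a b t₀ t : ℝ) (hab : b - a ≠ 0) :
    ∫ s in t₀..t, Real.exp (a * (t - s)) * Real.exp (b * (s - t₀)) =
      (Real.exp (b * (t - t₀)) - Real.exp (a * (t - t₀))) / (b - a) := by
  have h1 : ∀ s : ℝ, Real.exp (a * (t - s)) * Real.exp (b * (s - t₀)) =
      Real.exp (a * t - b * t₀) * Real.exp ((b - a) * s) := by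
    intro s; rw [← Real.exp_add, ← Real.exp_add]; ring_nf
  simp_rw [h1]
  rw [intervalIntegral.integral_const_mul, int_exp' (b - a) t₀ t hab, ← mul_div_assoc]
  congr 1
  rw [mul_sub, ← Real.exp_add, ← Real.exp_add]
  ring_nf

theorem stmt_0 (N : ℕ) (hN : 2 ≤ N) (D₁ t₀ : ℝ) (hD₁ : 0 < D₁)
    (v : ℕ → ℝ → ℝ)
    (hcont : ∀ k, 1 ≤ k → k ≤ N → ContinuousOn (v k) (Set.Ici t₀))
    (hnonneg : ∀ k, 1 ≤ k → k ≤ N → ∀ t, t₀ ≤ t → 0 ≤ v k t)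
    (hineq : ∀ k, 1 ≤ k → k ≤ N → ∀ t, t₀ ≤ t →
      v k t ≤ D₁ * k * ∫ s in t₀..t, Real.exp (D₁ * k * (t - s)) *
        ((∑ l ∈ Finset.Icc (k+1) N, v l s) + 1)) :
    ∀ n, n ≤ N - 2 → ∀ t, t₀ ≤ t →
      (∑ l ∈ Finset.Icc (N - n) N, v l t) + 1 ≤
        (N : ℝ) ^ n / (Nat.factorial n) * Real.exp (D₁ * N * (t - t₀)) := by
  have hN1 : 1 ≤ N := by omega
  have hNpos : (0:ℝ) < N := by exact_mod_cast (by omega : 0 < N)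
  have hb : (0:ℝ) < D₁ * N := by positivity
  intro n
  induction n with
  | zero =>
    intro _ t ht
    have h := hineq N hN1 le_rfl t ht
    have hIcc : Finset.Icc (N+1) N = ∅ := Finset.Icc_eq_empty (by omega)
    rw [hIcc] at h
    simp only [Finset.sum_empty, zero_add, mul_one] at h
    have hval := helper_int (D₁ * N) 0 t₀ t (by simpa using hb.ne')
    simp only [zero_mul, Real.exp_zero, mul_one, zero_sub] at hval
    rw [hval] at h
    have hkey : D₁ * ↑N * ((1 - Real.exp (D₁ * ↑N * (t - t₀))) / -(D₁ * ↑N)) =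
        Real.exp (D₁ * ↑N * (t - t₀)) - 1 := by
      field_simp; ring
    rw [hkey] at h
    simp only [Nat.sub_zero, Finset.Icc_self, Finset.sum_singleton, pow_zero,
      Nat.factorial_zero, Nat.cast_one, div_one, one_mul]
    linarith
  | succ n ih =>
    intro hn t ht
    have IH := ih (by omega)
    set k := N - (n+1) with hkdef
    have hk1 : 1 ≤ k := by omega
    have hkN : k ≤ N := by omega
    have hkk : k + 1 = N - n := by omega
    have hkc : (k : ℝ) = (N : ℝ) - ((n : ℝ) + 1) := by
      rw [hkdef]; push_cast [Nat.sub_le N (n+1), (by omega : n + 1 ≤ N)]; ring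
    have hm : (0:ℝ) < (n:ℝ) + 1 := by positivity
    have hF : (0:ℝ) < (Nat.factorial n : ℝ) := by exact_mod_cast n.factorial_pos
    have hne : D₁ * (N:ℝ) - D₁ * (k:ℝ) ≠ 0 := by
      have : D₁ * (N:ℝ) - D₁ * (k:ℝ) = D₁ * ((n:ℝ)+1) := by rw [hkc]; ring
      rw [this]; positivity
    have h := hineq k hk1 hkN t ht
    rw [hkk] at h
    -- continuity of the integrand
    have hfc : ContinuousOn
        (fun s => Real.exp (D₁ * k * (t - s)) * ((∑ l ∈ Finset.Icc (N - n) N, v l s) + 1))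
        (Set.Icc t₀ t) := by
      apply ContinuousOn.mul
      · exact (Real.continuous_exp.comp (continuous_const.mul (continuous_const.sub continuous_id))).continuousOn
      · apply ContinuousOn.add _ continuousOn_const
        apply continuousOn_finset_sum
        intro l hl
        simp only [Finset.mem_Icc] at hl
        exact (hcont l (by omega) hl.2).mono (fun x hx => hx.1)
    have hfi : IntervalIntegrable
        (fun s => Real.exp (D₁ * k * (t - s)) * ((∑ l ∈ Finset.Icc (N - n) N, v l s) + 1))
        MeasureTheory.volume t₀ t := by
      apply ContinuousOn.intervalIntegrable
      rwa [Set.uIcc_of_le ht]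
    have hgi : IntervalIntegrable
        (fun s => Real.exp (D₁ * k * (t - s)) *
          ((N : ℝ) ^ n / (Nat.factorial n) * Real.exp (D₁ * N * (s - t₀))))
        MeasureTheory.volume t₀ t := by
      apply Continuous.intervalIntegrable
      exact (Real.continuous_exp.comp (continuous_const.mul (continuous_const.sub
        continuous_id))).mul (continuous_const.mul (Real.continuous_exp.comp
        (continuous_const.mul (continuous_id.sub continuous_const))))
    have hmono : (∫ s in t₀..t, Real.exp (D₁ * k * (t - s)) *
          ((∑ l ∈ Finset.Icc (N - n) N, v l s) + 1)) ≤
        ∫ s in t₀..t, Real.exp (D₁ * k * (t - s)) *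
          ((N : ℝ) ^ n / (Nat.factorial n) * Real.exp (D₁ * N * (s - t₀))) := by
      apply intervalIntegral.integral_mono_on ht hfi hgi
      intro s hs
      exact mul_le_mul_of_nonneg_left (IH s hs.1) (Real.exp_pos _).le
    have hgval : (∫ s in t₀..t, Real.exp (D₁ * k * (t - s)) *
          ((N : ℝ) ^ n / (Nat.factorial n) * Real.exp (D₁ * N * (s - t₀)))) =
        (N : ℝ) ^ n / (Nat.factorial n) *
          ((Real.exp (D₁ * N * (t - t₀)) - Real.exp (D₁ * k * (t - t₀))) /
            (D₁ * N - D₁ * k)) := by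
      have h1 : ∀ s : ℝ, Real.exp (D₁ * k * (t - s)) *
          ((N : ℝ) ^ n / (Nat.factorial n) * Real.exp (D₁ * N * (s - t₀))) =
          (N : ℝ) ^ n / (Nat.factorial n) *
            (Real.exp (D₁ * k * (t - s)) * Real.exp (D₁ * N * (s - t₀))) := by
        intro s; ring
      simp_rw [h1]
      rw [intervalIntegral.integral_const_mul, helper_int (D₁ * k) (D₁ * N) t₀ t hne]
    have hv : v k t ≤ D₁ * k * ((N : ℝ) ^ n / (Nat.factorial n) *
        ((Real.exp (D₁ * N * (t - t₀)) - Real.exp (D₁ * k * (t - t₀))) /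
          (D₁ * N - D₁ * k))) := by
      calc v k t ≤ _ := h
        _ ≤ _ := mul_le_mul_of_nonneg_left (le_of_le_of_eq hmono hgval) (by positivity)
    -- split the sum
    have hsplit : (∑ l ∈ Finset.Icc k N, v l t) =
        v k t + ∑ l ∈ Finset.Icc (N - n) N, v l t := by
      rw [Finset.Icc_eq_cons_Ioc hkN, Finset.sum_cons, ← Finset.Icc_add_one_left_eq_Ioc, hkk]
    have hIH := IH t ht
    rw [hsplit]
    -- final arithmetic
    have hEa : (0:ℝ) ≤ Real.exp (D₁ * k * (t - t₀)) := (Real.exp_pos _).le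
    have hE : (0:ℝ) < Real.exp (D₁ * N * (t - t₀)) := Real.exp_pos _
    have hdenom : D₁ * (N:ℝ) - D₁ * (k:ℝ) = D₁ * ((n:ℝ) + 1) := by rw [hkc]; ring
    have hfact : (Nat.factorial (n+1) : ℝ) = ((n:ℝ) + 1) * (Nat.factorial n : ℝ) := by
      push_cast [Nat.factorial_succ]; ring
    have hkpos : (0:ℝ) ≤ (k:ℝ) := Nat.cast_nonneg k
    rw [hdenom] at hv
    set C := (N : ℝ) ^ n / (Nat.factorial n) with hC
    have hCpos : 0 < C := div_pos (pow_pos hNpos n) hF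
    set E := Real.exp (D₁ * N * (t - t₀))
    set Ea := Real.exp (D₁ * k * (t - t₀))
    have hbound : D₁ * (k:ℝ) * (C * ((E - Ea) / (D₁ * ((n:ℝ) + 1)))) ≤
        (k:ℝ) * C * E / ((n:ℝ) + 1) := by
      rw [show D₁ * (k:ℝ) * (C * ((E - Ea) / (D₁ * ((n:ℝ) + 1)))) =
        (k:ℝ) * C * (E - Ea) / ((n:ℝ) + 1) by field_simp]
      apply (div_le_div_iff_of_pos_right hm).mpr
      nlinarith [mul_nonneg (mul_nonneg hkpos hCpos.le) hEa]
    have hfin : (k:ℝ) * C * E / ((n:ℝ) + 1) + C * E =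
        (N : ℝ) ^ (n+1) / (Nat.factorial (n+1)) * E := by
      rw [hfact, hC, hkc, pow_succ]
      field_simp
      ring
    linarith [hv, hIH, hbound]
end

section
/- Let 0 < ε₀ < 1, η₀ ≥ 0, η₁ > 0 satisfy (1+η₁)ε₀² - (η₀+η₁)ε₀ + η₀ = 0 with ε₀ the larger root, and suppose (1-ε₀)/ε₀ ≥ 1/η₁ and η₁ε₀ - η₀(1-ε₀) > 0 with η₁ε₀ - η₀(1-ε₀) = ε₀(ε₀ + η₀(1-ε₀))/(1-ε₀). If nonnegative reals W_0, W_1, ..., W_{N+1} satisfy W_0 = 0, W_{N+1} = 1, and W_k ≤ (1/η₁) ∑_{l=k+1}^{N+1} W_l + (η₀/η₁) W_{k-1} for 1 ≤ k ≤ N, then W_k ≤ ((1-ε₀)/ε₀) ∑_{l=k+1}^{N+1} W_l for all 1 ≤ k ≤ N. -/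
theorem stmt_1 (N : ℕ) (hN : 1 ≤ N) (ε₀ η₀ η₁ : ℝ)
    (hε₀ : 0 < ε₀) (hε₀1 : ε₀ < 1) (hη₀ : 0 ≤ η₀) (hη₁ : 0 < η₁)
    (hroot : (1+η₁) * ε₀^2 - (η₀+η₁) * ε₀ + η₀ = 0)
    (hlarger : ∀ s : ℝ, (1+η₁) * s^2 - (η₀+η₁) * s + η₀ = 0 → s ≤ ε₀)
    (h1 : 1/η₁ ≤ (1-ε₀)/ε₀)
    (h2 : 0 < η₁*ε₀ - η₀*(1-ε₀))
    (h3 : η₁*ε₀ - η₀*(1-ε₀) = ε₀*(ε₀ + η₀*(1-ε₀))/(1-ε₀))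
    (W : ℕ → ℝ) (hWnn : ∀ k, 0 ≤ W k) (hW0 : W 0 = 0) (hWN1 : W (N+1) = 1)
    (hWrec : ∀ k, 1 ≤ k → k ≤ N →
      W k ≤ (1/η₁) * ∑ l ∈ Finset.Icc (k+1) (N+1), W l + (η₀/η₁) * W (k-1)) :
    ∀ k, 1 ≤ k → k ≤ N →
      W k ≤ ((1-ε₀)/ε₀) * ∑ l ∈ Finset.Icc (k+1) (N+1), W l := by
  have hS : ∀ a b : ℕ, 0 ≤ ∑ l ∈ Finset.Icc a b, W l :=
    fun a b => Finset.sum_nonneg fun i _ => hWnn i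
  -- h3 cleared of denominators
  have hne : (1:ℝ)-ε₀ ≠ 0 := by linarith
  have h3' : (η₁*ε₀ - η₀*(1-ε₀)) * (1-ε₀) = ε₀*(ε₀ + η₀*(1-ε₀)) := by
    rw [h3]; field_simp
  intro k
  induction k with
  | zero => intro h; exact absurd h (by omega)
  | succ k ih =>
    intro _ hkN
    rcases Nat.eq_zero_or_pos k with hk0 | hk1
    · subst hk0
      have key := hWrec 1 le_rfl (by omega)
      rw [show (1:ℕ) - 1 = 0 from rfl, hW0] at key
      simp only [mul_zero, add_zero] at key
      calc W 1 ≤ (1/η₁) * ∑ l ∈ Finset.Icc 2 (N+1), W l := key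
        _ ≤ ((1-ε₀)/ε₀) * ∑ l ∈ Finset.Icc 2 (N+1), W l :=
            mul_le_mul_of_nonneg_right h1 (hS _ _)
    · have IH := ih hk1 (by omega)
      have hsplit : ∑ l ∈ Finset.Icc (k+1) (N+1), W l
          = W (k+1) + ∑ l ∈ Finset.Icc (k+2) (N+1), W l := by
        rw [show Finset.Icc (k+1) (N+1) = insert (k+1) (Finset.Icc (k+2) (N+1)) by
          ext x; simp only [Finset.mem_Icc, Finset.mem_insert]; omega]
        rw [Finset.sum_insert (by simp)]
      rw [hsplit] at IH
      have key := hWrec (k+1) (by omega) hkN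
      rw [Nat.add_sub_cancel] at key
      set a := W (k+1) with ha
      set S := ∑ l ∈ Finset.Icc (k+2) (N+1), W l with hSdef
      have hSnn : 0 ≤ S := hS _ _
      have hWk : 0 ≤ W k := hWnn k
      -- from key and IH: a ≤ (1/η₁) S + (η₀/η₁) * ((1-ε₀)/ε₀) * (a + S)
      have step : a ≤ (1/η₁) * S + (η₀/η₁) * (((1-ε₀)/ε₀) * (a + S)) := by
        refine key.trans ?_
        gcongr
      -- clear denominators: η₁ ε₀ a ≤ ε₀ S + η₀ (1-ε₀) (a + S)
      have step2 : η₁ * ε₀ * a ≤ ε₀ * S + η₀ * (1-ε₀) * (a + S) := by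
        have := mul_le_mul_of_nonneg_left step (le_of_lt (mul_pos hη₁ hε₀))
        have hη₁' := hη₁.ne'
        have hε₀' := hε₀.ne'
        calc η₁ * ε₀ * a ≤ η₁ * ε₀ * ((1/η₁) * S + (η₀/η₁) * (((1-ε₀)/ε₀) * (a + S))) := this
          _ = ε₀ * S + η₀ * (1-ε₀) * (a + S) := by field_simp
      -- so (η₁ε₀ - η₀(1-ε₀)) a ≤ (ε₀ + η₀(1-ε₀)) S ; multiply by (1-ε₀) and use h3'
      have hA : 0 < ε₀ + η₀*(1-ε₀) := by nlinarith
      have goal' : ε₀ * a ≤ (1-ε₀) * S := by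
        have h4 : (η₁*ε₀ - η₀*(1-ε₀)) * a ≤ (ε₀ + η₀*(1-ε₀)) * S := by nlinarith
        have hmul := mul_le_mul_of_nonneg_left h4 (by linarith : (0:ℝ) ≤ 1-ε₀)
        have h5 : ε₀*(ε₀ + η₀*(1-ε₀)) * a ≤ (1-ε₀) * ((ε₀ + η₀*(1-ε₀)) * S) := by
          calc ε₀*(ε₀ + η₀*(1-ε₀)) * a = (1-ε₀) * ((η₁*ε₀ - η₀*(1-ε₀)) * a) := by
                rw [← h3']; ring
            _ ≤ _ := hmul
        have h6 : (ε₀ + η₀*(1-ε₀)) * (ε₀*a) ≤ (ε₀ + η₀*(1-ε₀)) * ((1-ε₀)*S) := by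
          calc (ε₀ + η₀*(1-ε₀)) * (ε₀*a) = ε₀*(ε₀ + η₀*(1-ε₀)) * a := by ring
            _ ≤ (1-ε₀) * ((ε₀ + η₀*(1-ε₀)) * S) := h5
            _ = (ε₀ + η₀*(1-ε₀)) * ((1-ε₀)*S) := by ring
        exact le_of_mul_le_mul_left h6 hA
      rw [div_mul_eq_mul_div, le_div_iff₀ hε₀, mul_comm]
      exact goal'
end

section
/- Let x(t) be a solution on [t_0,∞) of ẋ = f(t,x) in ℝ^d where f(t,x) = ∑_{|α|≥1} f_α(t) x^α is analytic with coefficients satisfying sup_{t≥t_0} ∑_{j=1}^d ∑_{|α|=k} |f_{j,α}(t)| ≤ D₀ R^{-k} for all k ≥ 1. Suppose 0 < ‖x₀‖_∞ < R/e and define M₀ = ‖x₀‖_∞^{(e-1)/(2e-1)} (R/e)^{e/(2e-1)} and T* = ((e-1)R/((2e-1)D₀)) ln(R/(e‖x₀‖_∞)). Then M₀ < R/e and ‖x(t)‖_∞ ≤ M₀ for all t_0 ≤ t ≤ t_0 + T*. -/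
lemma shell_finite (d k : ℕ) : Finite {α : Fin d → ℕ // ∑ i, α i = k} := by
  apply Finite.of_injective (β := Fin d → Fin (k+1))
    (f := fun α i => ⟨α.1 i, by
      have h := Finset.single_le_sum (f := α.1) (fun j _ => Nat.zero_le _) (Finset.mem_univ i)
      have h2 := α.2
      omega⟩)
  intro a b hab
  ext i
  exact congrArg Fin.val (congrFun hab i)

lemma deriv_bound (d : ℕ) (D₀ R : ℝ) (hD₀ : 0 < D₀) (hR : 0 < R)
    (a : (Fin d → ℕ) → Fin d → ℝ)
    (hzero : ∀ j, a 0 j = 0)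
    (hdecay : ∀ k : ℕ, 1 ≤ k →
      ∑ j, ∑' α : {α : Fin d → ℕ // ∑ i, α i = k}, |a α.1 j| ≤ D₀ / R ^ k)
    (v : Fin d → ℝ) (hv : ‖v‖ < R * (Real.exp 1)⁻¹) :
    ‖(fun j => ∑' α : {α : Fin d → ℕ // 1 ≤ ∑ i, α i}, a α.1 j * ∏ i, (v i) ^ (α.1 i) :
        Fin d → ℝ)‖
      ≤ (D₀ / (R * (1 - (Real.exp 1)⁻¹))) * ‖v‖ := by
  have he1 : (1:ℝ) < Real.exp 1 := by
    have h9 := Real.exp_one_gt_d9; norm_num at h9; linarith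
  have hei : (0:ℝ) < (Real.exp 1)⁻¹ := by positivity
  have hei1 : (Real.exp 1)⁻¹ < 1 := by
    rw [inv_lt_one_iff₀]; right; exact he1
  set M := ‖v‖ with hM
  have hM0 : 0 ≤ M := norm_nonneg _
  have hMR : M / R < (Real.exp 1)⁻¹ := by
    exact (div_lt_iff₀ hR).mpr (by linarith)
  have hMR0 : 0 ≤ M / R := by positivity
  have hMR1 : M / R < 1 := lt_trans hMR hei1
  set K := D₀ / (R * (1 - (Real.exp 1)⁻¹)) with hK
  have hK0 : 0 < K := by
    apply div_pos hD₀; apply mul_pos hR; linarith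
  rw [pi_norm_le_iff_of_nonneg (by positivity)]
  intro j
  -- dominating family
  set H : (Fin d → ℕ) → ℝ := fun α => |a α j| * M ^ (∑ i, α i) with hH
  have hH0 : ∀ α, 0 ≤ H α := fun α => by positivity
  -- shell sums
  set S : ℕ → ℝ := fun k => ∑' α : {α : Fin d → ℕ // ∑ i, α i = k}, H α.1 with hSdef
  have hS0 : ∀ k, 0 ≤ S k := fun k => tsum_nonneg (fun α => hH0 _)
  have hSzero : S 0 = 0 := by
    have : ∀ α : {α : Fin d → ℕ // ∑ i, α i = 0}, H α.1 = 0 := by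
      intro α
      have : α.1 = 0 := by
        funext i
        show α.1 i = 0
        have h := Finset.single_le_sum (f := α.1) (fun j _ => Nat.zero_le _) (Finset.mem_univ i)
        have h2 := α.2
        omega
      simp [hH, this, hzero]
    simp [hSdef, tsum_congr this]
  have hSle : ∀ k, S k ≤ D₀ * (M / R) ^ k := by
    intro k
    rcases Nat.eq_zero_or_pos k with rfl | hk
    · rw [hSzero]; positivity
    · have hcongr : ∀ α : {α : Fin d → ℕ // ∑ i, α i = k}, H α.1 = M ^ k * |a α.1 j| := by
        intro α; rw [hH]; simp only [α.2]; ring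
      have : S k = M ^ k * ∑' α : {α : Fin d → ℕ // ∑ i, α i = k}, |a α.1 j| := by
        show (∑' α : {α : Fin d → ℕ // ∑ i, α i = k}, H α.1) = _
        rw [tsum_congr hcongr, tsum_mul_left]
      rw [this]
      have hsum : ∑' α : {α : Fin d → ℕ // ∑ i, α i = k}, |a α.1 j| ≤ D₀ / R ^ k := by
        refine le_trans ?_ (hdecay k hk)
        exact Finset.single_le_sum
          (f := fun j => ∑' α : {α : Fin d → ℕ // ∑ i, α i = k}, |a α.1 j|)
          (fun i _ => tsum_nonneg (fun α => abs_nonneg _)) (Finset.mem_univ j)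
      calc M ^ k * ∑' α : {α : Fin d → ℕ // ∑ i, α i = k}, |a α.1 j|
          ≤ M ^ k * (D₀ / R ^ k) := by
            exact mul_le_mul_of_nonneg_left hsum (by positivity)
        _ = D₀ * (M / R) ^ k := by rw [div_pow]; field_simp
  have hSsummable : Summable S :=
    Summable.of_nonneg_of_le hS0 hSle
      ((summable_geometric_of_lt_one hMR0 hMR1).mul_left D₀)
  -- summability of H via sigma decomposition
  have hshell : ∀ k, Summable (fun α : {α : Fin d → ℕ // ∑ i, α i = k} => H α.1) := by
    intro k
    have := shell_finite d k
    exact Summable.of_finite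
  set E := Equiv.sigmaFiberEquiv (fun α : Fin d → ℕ => ∑ i, α i) with hE
  have hHE : Summable (H ∘ E) := by
    apply (summable_sigma_of_nonneg (fun σ => hH0 _)).mpr
    exact ⟨fun k => hshell k, by exact hSsummable⟩
  have hHsummable : Summable H := E.summable_iff.mp hHE
  have htsumH : ∑' α, H α = ∑' k, S k := by
    rw [← E.tsum_eq H, Summable.tsum_sigma (f := fun c => H (E c)) hHE]
    exact tsum_congr fun k => tsum_congr fun α => rfl
  -- bound ∑' k, S k
  have hgeo : Summable (fun k : ℕ => (D₀ * (M / R)) * ((Real.exp 1)⁻¹) ^ k) :=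
    (summable_geometric_of_lt_one hei.le hei1).mul_left _
  have hSsum_le : ∑' k, S k ≤ K * M := by
    rw [Summable.tsum_eq_zero_add hSsummable, hSzero, zero_add]
    have hterm : ∀ k : ℕ, S (k + 1) ≤ (D₀ * (M / R)) * ((Real.exp 1)⁻¹) ^ k := by
      intro k
      calc S (k+1) ≤ D₀ * (M / R) ^ (k+1) := hSle (k+1)
        _ = (D₀ * (M / R)) * (M / R) ^ k := by ring
        _ ≤ (D₀ * (M / R)) * ((Real.exp 1)⁻¹) ^ k := by
            apply mul_le_mul_of_nonneg_left (pow_le_pow_left₀ hMR0 hMR.le k) (by positivity)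
    calc ∑' k, S (k+1) ≤ ∑' k : ℕ, (D₀ * (M / R)) * ((Real.exp 1)⁻¹) ^ k := by
          apply Summable.tsum_le_tsum hterm _ hgeo
          exact (summable_nat_add_iff 1).mpr hSsummable
      _ = (D₀ * (M / R)) * (1 - (Real.exp 1)⁻¹)⁻¹ := by
          rw [tsum_mul_left, tsum_geometric_of_lt_one hei.le hei1]
      _ = K * M := by rw [hK]; field_simp
  -- now the actual series
  set F : {α : Fin d → ℕ // 1 ≤ ∑ i, α i} → ℝ :=
    fun α => a α.1 j * ∏ i, (v i) ^ (α.1 i) with hF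
  have hFle : ∀ α, |F α| ≤ H α.1 := by
    intro α
    rw [hF, hH]
    simp only [abs_mul]
    apply mul_le_mul_of_nonneg_left _ (abs_nonneg _)
    rw [Finset.abs_prod]
    calc ∏ i, |v i ^ α.1 i| = ∏ i, |v i| ^ α.1 i := by
          simp [abs_pow]
      _ ≤ ∏ i, M ^ α.1 i := by
          apply Finset.prod_le_prod (fun i _ => by positivity)
          intro i _
          exact pow_le_pow_left₀ (abs_nonneg _)
            (by rw [← Real.norm_eq_abs]; exact norm_le_pi_norm v i) _
      _ = M ^ (∑ i, α.1 i) := Finset.prod_pow_eq_pow_sum _ _ _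
  have hHsub : Summable (fun α : {α : Fin d → ℕ // 1 ≤ ∑ i, α i} => H α.1) :=
    hHsummable.comp_injective Subtype.val_injective
  have hFabs : Summable (fun α => |F α|) :=
    Summable.of_nonneg_of_le (fun α => abs_nonneg _) hFle hHsub
  have hFsummable : Summable F := hFabs.of_abs
  show |∑' α, F α| ≤ K * M
  calc |∑' α, F α| ≤ ∑' α, |F α| := by
        simpa [Real.norm_eq_abs] using
          norm_tsum_le_tsum_norm (f := F) (by simpa [Real.norm_eq_abs] using hFabs)
    _ ≤ ∑' α : {α : Fin d → ℕ // 1 ≤ ∑ i, α i}, H α.1 := Summable.tsum_le_tsum hFle hFabs hHsub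
    _ ≤ ∑' α, H α :=
        Summable.tsum_le_tsum_of_inj Subtype.val Subtype.val_injective
          (fun _ _ => hH0 _) (fun _ => le_refl _) hHsub hHsummable
    _ = ∑' k, S k := htsumH
    _ ≤ K * M := hSsum_le

theorem stmt_7 (d : ℕ) (hd : 1 ≤ d) (t₀ D₀ R : ℝ) (hD₀ : 0 < D₀) (hR : 0 < R)
    (c : (Fin d → ℕ) → ℝ → Fin d → ℝ)
    (hzero : ∀ t, c 0 t = 0)
    (hdecay : ∀ k : ℕ, 1 ≤ k → ∀ t, t₀ ≤ t →
      ∑ j, ∑' α : {α : Fin d → ℕ // ∑ i, α i = k}, |c α.1 t j| ≤ D₀ / R ^ k)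
    (x : ℝ → (Fin d → ℝ)) (x₀ : Fin d → ℝ)
    (hx0 : x t₀ = x₀) (hx₀pos : 0 < ‖x₀‖)
    (hode : ∀ t, t₀ ≤ t → HasDerivAt x
      (fun j => ∑' α : {α : Fin d → ℕ // 1 ≤ ∑ i, α i},
        c α.1 t j * ∏ i, (x t i) ^ (α.1 i)) t)
    (hsmall : ‖x₀‖ < R / Real.exp 1) :
    (let e := Real.exp 1
     let M₀ := ‖x₀‖ ^ ((e-1)/(2*e-1)) * (R/e) ^ (e/(2*e-1))
     let T := ((e-1)*R/((2*e-1)*D₀)) * Real.log (R/(e*‖x₀‖))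
     M₀ < R/e ∧ ∀ t, t₀ ≤ t → t ≤ t₀ + T → ‖x t‖ ≤ M₀) := by
  intro e M₀ T
  have he : e = Real.exp 1 := rfl
  have he1 : (1:ℝ) < e := by
    have h9 := Real.exp_one_gt_d9; rw [he]; norm_num at h9; linarith
  have he0 : (0:ℝ) < e := by linarith
  have hn0 : (0:ℝ) < ‖x₀‖ := hx₀pos
  have h2e : (0:ℝ) < 2*e - 1 := by linarith
  have hp : (0:ℝ) < e/(2*e-1) := by positivity
  have hθ : (0:ℝ) < (e-1)/(2*e-1) := by
    apply div_pos (by linarith) h2e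
  have hRe : (0:ℝ) < R/e := by positivity
  have hθp : (e-1)/(2*e-1) + e/(2*e-1) = 1 := by rw [← add_div, div_eq_one_iff_eq h2e.ne']; ring
  have hsmall' : ‖x₀‖ < R/e := hsmall
  -- part 1
  have hM₀eq : M₀ = ‖x₀‖ ^ ((e-1)/(2*e-1)) * (R/e) ^ (e/(2*e-1)) := rfl
  have hM₀lt : M₀ < R/e := by
    have h1 : ‖x₀‖ ^ ((e-1)/(2*e-1)) < (R/e) ^ ((e-1)/(2*e-1)) :=
      Real.rpow_lt_rpow hn0.le hsmall' hθ
    calc M₀ = ‖x₀‖ ^ ((e-1)/(2*e-1)) * (R/e) ^ (e/(2*e-1)) := rfl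
      _ < (R/e) ^ ((e-1)/(2*e-1)) * (R/e) ^ (e/(2*e-1)) :=
          mul_lt_mul_of_pos_right h1 (Real.rpow_pos_of_pos hRe _)
      _ = (R/e) ^ (((e-1)/(2*e-1)) + (e/(2*e-1))) := (Real.rpow_add hRe _ _).symm
      _ = R/e := by rw [hθp, Real.rpow_one]
  refine ⟨hM₀lt, ?_⟩
  -- setup for part 2
  have hD₀' : D₀ ≠ 0 := ne_of_gt hD₀
  have hR' : R ≠ 0 := ne_of_gt hR
  have he0' : e ≠ 0 := ne_of_gt he0
  have he1' : e - 1 ≠ 0 := by intro h; linarith [sub_eq_zero.mp h]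
  have h2e' : 2*e - 1 ≠ 0 := ne_of_gt h2e
  set K := D₀ / (R * (1 - e⁻¹)) with hK
  have hei1 : e⁻¹ < 1 := by rw [inv_lt_one_iff₀]; right; exact he1
  have hK0 : 0 < K := by
    apply div_pos hD₀; apply mul_pos hR; linarith
  have hen : (0:ℝ) < e * ‖x₀‖ := by positivity
  have hRen : (0:ℝ) < R/(e*‖x₀‖) := by positivity
  have hT : T = ((e-1)*R/((2*e-1)*D₀)) * Real.log (R/(e*‖x₀‖)) := rfl
  have hL : K * T = (e/(2*e-1)) * Real.log (R/(e*‖x₀‖)) := by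
    rw [hT, hK]
    field_simp
  have hT0 : 0 ≤ T := by
    rw [hT]
    have hlog : 0 < Real.log (R/(e*‖x₀‖)) := by
      apply Real.log_pos
      rw [lt_div_iff₀ hen, one_mul]
      have h2 : ‖x₀‖ * e < R := (lt_div_iff₀ he0).mp hsmall'
      nlinarith
    have hc : 0 < (e-1)*R/((2*e-1)*D₀) := by
      apply div_pos (by nlinarith) (by positivity)
    exact le_of_lt (mul_pos hc hlog)
  have hKT : ‖x₀‖ * Real.exp (K * T) = M₀ := by
    have hstep : Real.exp (K*T) = (R/(e*‖x₀‖)) ^ (e/(2*e-1)) := by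
      rw [hL, Real.rpow_def_of_pos hRen, mul_comm]
    rw [hstep, show R/(e*‖x₀‖) = (R/e)/‖x₀‖ by rw [div_div],
      Real.div_rpow hRe.le hn0.le, hM₀eq,
      show (e-1)/(2*e-1) = 1 - e/(2*e-1) by rw [eq_sub_iff_add_eq, hθp],
      Real.rpow_sub hn0, Real.rpow_one]
    field_simp
  have hnM₀ : ‖x₀‖ < M₀ := by
    have h1 : ‖x₀‖ ^ (e/(2*e-1)) < (R/e) ^ (e/(2*e-1)) :=
      Real.rpow_lt_rpow hn0.le hsmall' hp
    calc ‖x₀‖ = ‖x₀‖ ^ (((e-1)/(2*e-1)) + (e/(2*e-1))) := by rw [hθp, Real.rpow_one]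
      _ = ‖x₀‖ ^ ((e-1)/(2*e-1)) * ‖x₀‖ ^ (e/(2*e-1)) := Real.rpow_add hn0 _ _
      _ < ‖x₀‖ ^ ((e-1)/(2*e-1)) * (R/e) ^ (e/(2*e-1)) :=
          mul_lt_mul_of_pos_left h1 (Real.rpow_pos_of_pos hn0 _)
      _ = M₀ := rfl
  -- derivative bound
  set g : ℝ → Fin d → ℝ := fun u j => ∑' α : {α : Fin d → ℕ // 1 ≤ ∑ i, α i},
    c α.1 u j * ∏ i, (x u i) ^ (α.1 i) with hg
  have hgb : ∀ u, t₀ ≤ u → ‖x u‖ ≤ M₀ → ‖g u‖ ≤ K * ‖x u‖ := by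
    intro u hu hxu
    exact deriv_bound d D₀ R hD₀ hR (fun α j => c α u j)
      (fun j => congrFun (hzero u) j)
      (fun k hk => hdecay k hk u hu)
      (x u) (lt_of_le_of_lt hxu (by rw [div_eq_mul_inv] at hM₀lt; exact hM₀lt))
  -- bootstrap
  by_contra hcon
  push_neg at hcon
  obtain ⟨t₁, ht₁a, ht₁b, ht₁⟩ := hcon
  set Q : Set ℝ := {u | u ∈ Set.Icc t₀ (t₀+T) ∧ M₀ ≤ ‖x u‖} with hQ
  have hQclosed : IsClosed Q := by
    have hc : ContinuousOn (fun u => ‖x u‖) (Set.Icc t₀ (t₀+T)) := fun u hu =>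
      (((hode u hu.1).continuousAt).norm).continuousWithinAt
    have h := hc.preimage_isClosed_of_isClosed isClosed_Icc (isClosed_Ici (a := M₀))
    convert h using 1
    rfl
  have hQne : Q.Nonempty := ⟨t₁, ⟨⟨ht₁a, ht₁b⟩, ht₁.le⟩⟩
  have hQbdd : BddBelow Q := ⟨t₀, fun u hu => hu.1.1⟩
  set s := sInf Q with hs
  have hsQ : s ∈ Q := hQclosed.csInf_mem hQne hQbdd
  obtain ⟨⟨hst₀, hsT⟩, hsM⟩ := hsQ
  have hless : ∀ u ∈ Set.Ico t₀ s, ‖x u‖ ≤ M₀ := by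
    rintro u ⟨hu1, hu2⟩
    by_contra hbig
    push_neg at hbig
    have hmem : u ∈ Q := ⟨⟨hu1, le_trans hu2.le hsT⟩, hbig.le⟩
    exact absurd (csInf_le hQbdd hmem) (not_le.mpr hu2)
  have hgron := norm_le_gronwallBound_of_norm_deriv_right_le
    (f := x) (f' := g) (δ := ‖x₀‖) (K := K) (ε := 0) (a := t₀) (b := s)
    (fun u hu => ((hode u hu.1).continuousAt).continuousWithinAt)
    (fun u hu => (hode u hu.1).hasDerivWithinAt)
    (le_of_eq (by rw [hx0]))
    (fun u hu => by rw [add_zero]; exact hgb u hu.1 (hless u hu))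
    s ⟨hst₀, le_refl s⟩
  rw [gronwallBound_ε0] at hgron
  rcases lt_or_eq_of_le hsT with hlt | heq
  · have hexp : ‖x₀‖ * Real.exp (K*(s - t₀)) < ‖x₀‖ * Real.exp (K*T) := by
      apply mul_lt_mul_of_pos_left _ hn0
      exact Real.exp_lt_exp.mpr (mul_lt_mul_of_pos_left (by linarith) hK0)
    rw [hKT] at hexp
    linarith
  · have hxsM : ‖x s‖ ≤ M₀ := by
      rw [← hKT]
      have : s - t₀ = T := by linarith
      rw [this] at hgron
      exact hgron
    have hst₁ : s ≤ t₁ := csInf_le hQbdd ⟨⟨ht₁a, ht₁b⟩, ht₁.le⟩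
    have ht₁s : t₁ = s := le_antisymm (by rw [← heq] at ht₁b; exact ht₁b) hst₁
    rw [ht₁s] at ht₁
    linarith
end

section
/- Under the uniform decay condition of Assumption 1 with constants D₀, R, if the solution x(t) of ẋ = f(t,x) remains in the ball ‖x(t)‖_∞ ≤ M₀ < R/e for t ∈ [t_0, t_0+T*], then for those t one has ‖x(t)‖_∞ ≤ ‖x₀‖_∞ e^{D₀(t-t_0)/(R-M₀)}. -/
open Finset Real
set_option maxHeartbeats 1000000

noncomputable instance fiberFintype (d k : ℕ) : Fintype {α : Fin d → ℕ // ∑ i, α i = k} :=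
  Fintype.subtype (Finset.Nat.antidiagonalTuple d k)
    (fun _ => Finset.Nat.mem_antidiagonalTuple)

def degEquiv (d : ℕ) : {α : Fin d → ℕ // 1 ≤ ∑ i, α i} ≃
    Σ k : ℕ, {α : Fin d → ℕ // ∑ i, α i = k + 1} where
  toFun α := ⟨(∑ i, α.1 i) - 1, α.1, by omega⟩
  invFun p := ⟨p.2.1, by have := p.2.2; omega⟩
  left_inv α := rfl
  right_inv := fun ⟨k, α, hα⟩ => by
    have hk : (∑ i, α i) - 1 = k := by omega
    subst hk
    rfl

lemma key_bound (d : ℕ) (t₀ D₀ R M₀ : ℝ)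
    (hD₀ : 0 < D₀) (hR : 0 < R) (hM₀pos : 0 < M₀) (hMR : M₀ < R)
    (c : (Fin d → ℕ) → ℝ → Fin d → ℝ)
    (hdecay : ∀ k : ℕ, 1 ≤ k → ∀ t, t₀ ≤ t →
      ∑ j, ∑' α : {α : Fin d → ℕ // ∑ i, α i = k}, |c α.1 t j| ≤ D₀ / R ^ k)
    (t : ℝ) (ht : t₀ ≤ t) (v : Fin d → ℝ) (hv : ‖v‖ ≤ M₀) (j : Fin d) :
    |∑' α : {α : Fin d → ℕ // 1 ≤ ∑ i, α i}, c α.1 t j * ∏ i, v i ^ (α.1 i)|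
      ≤ D₀ / (R - M₀) * ‖v‖ := by
  have hvnn : (0:ℝ) ≤ ‖v‖ := norm_nonneg v
  have hRM : (0:ℝ) < R - M₀ := by linarith
  have hvle : ∀ i, |v i| ≤ ‖v‖ := fun i => by
    simpa [Real.norm_eq_abs] using norm_le_pi_norm v i
  set E := degEquiv d with hE
  set g : {α : Fin d → ℕ // 1 ≤ ∑ i, α i} → ℝ :=
    fun α => c α.1 t j * ∏ i, v i ^ (α.1 i) with hg
  set G : (Σ k : ℕ, {α : Fin d → ℕ // ∑ i, α i = k + 1}) → ℝ :=
    fun p => |c p.2.1 t j * ∏ i, v i ^ (p.2.1 i)| with hG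
  have hGnn : ∀ p, 0 ≤ G p := fun p => abs_nonneg _
  -- per-fiber single-j bound on |c|
  have hc : ∀ k : ℕ, 1 ≤ k →
      ∑ α : {α : Fin d → ℕ // ∑ i, α i = k}, |c α.1 t j| ≤ D₀ / R ^ k := by
    intro k hk
    have h := hdecay k hk t ht
    calc ∑ α : {α : Fin d → ℕ // ∑ i, α i = k}, |c α.1 t j|
        = ∑' α : {α : Fin d → ℕ // ∑ i, α i = k}, |c α.1 t j| := (tsum_fintype _).symm
      _ ≤ ∑ j', ∑' α : {α : Fin d → ℕ // ∑ i, α i = k}, |c α.1 t j'| := by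
          apply Finset.single_le_sum (f := fun j' => ∑' α : {α : Fin d → ℕ // ∑ i, α i = k}, |c α.1 t j'|)
            (fun j' _ => tsum_nonneg fun _ => abs_nonneg _) (Finset.mem_univ j)
      _ ≤ D₀ / R ^ k := h
  -- termwise bound
  have hterm : ∀ (k : ℕ) (α : {α : Fin d → ℕ // ∑ i, α i = k}),
      |c α.1 t j * ∏ i, v i ^ (α.1 i)| ≤ |c α.1 t j| * ‖v‖ ^ k := by
    intro k α
    rw [abs_mul]
    refine mul_le_mul_of_nonneg_left ?_ (abs_nonneg _)
    calc |∏ i, v i ^ (α.1 i)| = ∏ i, |v i| ^ (α.1 i) := by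
          rw [abs_prod]; simp [abs_pow]
      _ ≤ ∏ i, ‖v‖ ^ (α.1 i) := by
          apply Finset.prod_le_prod (fun i _ => by positivity)
          exact fun i _ => pow_le_pow_left₀ (abs_nonneg _) (hvle i) _
      _ = ‖v‖ ^ (∑ i, α.1 i) := by rw [Finset.prod_pow_eq_pow_sum]
      _ = ‖v‖ ^ k := by rw [α.2]
  -- fiber sums
  set S : ℕ → ℝ := fun k => ∑' α : {α : Fin d → ℕ // ∑ i, α i = k + 1}, G ⟨k, α⟩ with hSdef
  set B : ℕ → ℝ := fun k => (D₀ * ‖v‖ / R) * (M₀ / R) ^ k with hBdef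
  have hSnn : ∀ k, 0 ≤ S k := fun k => tsum_nonneg fun _ => abs_nonneg _
  have hSB : ∀ k, S k ≤ B k := by
    intro k
    have h1 : S k ≤ ‖v‖ ^ (k + 1) * (D₀ / R ^ (k + 1)) := by
      calc S k = ∑ α : {α : Fin d → ℕ // ∑ i, α i = k + 1}, G ⟨k, α⟩ := tsum_fintype _
        _ ≤ ∑ α : {α : Fin d → ℕ // ∑ i, α i = k + 1}, |c α.1 t j| * ‖v‖ ^ (k + 1) :=
            Finset.sum_le_sum fun α _ => hterm (k+1) α
        _ = (∑ α : {α : Fin d → ℕ // ∑ i, α i = k + 1}, |c α.1 t j|) * ‖v‖ ^ (k + 1) := by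
            rw [Finset.sum_mul]
        _ ≤ (D₀ / R ^ (k + 1)) * ‖v‖ ^ (k + 1) := by
            apply mul_le_mul_of_nonneg_right (hc (k+1) (by omega)) (by positivity)
        _ = ‖v‖ ^ (k + 1) * (D₀ / R ^ (k + 1)) := by ring
    have h2 : ‖v‖ ^ (k + 1) ≤ ‖v‖ * M₀ ^ k := by
      rw [pow_succ']
      exact mul_le_mul_of_nonneg_left (pow_le_pow_left₀ hvnn hv k) hvnn
    have h3 : ‖v‖ * M₀ ^ k * (D₀ / R ^ (k + 1)) = D₀ * ‖v‖ / R * (M₀ / R) ^ k := by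
      rw [div_pow]
      field_simp
      ring
    calc S k ≤ ‖v‖ ^ (k + 1) * (D₀ / R ^ (k + 1)) := h1
      _ ≤ ‖v‖ * M₀ ^ k * (D₀ / R ^ (k + 1)) :=
          mul_le_mul_of_nonneg_right h2 (by positivity)
      _ = B k := h3
  have hr1 : M₀ / R < 1 := (div_lt_one hR).mpr hMR
  have hBsum : Summable B := (summable_geometric_of_lt_one (by positivity) hr1).mul_left _
  have hBtsum : ∑' k, B k = D₀ / (R - M₀) * ‖v‖ := by
    simp only [hBdef]
    rw [tsum_mul_left, tsum_geometric_of_lt_one (by positivity) hr1]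
    rw [eq_comm]
    field_simp
  have hfib : ∀ k : ℕ, Summable (fun α : {α : Fin d → ℕ // ∑ i, α i = k + 1} => G ⟨k, α⟩) :=
    fun k => Summable.of_finite
  have hGsum : Summable G := (summable_sigma_of_nonneg hGnn).mpr
    ⟨hfib, Summable.of_nonneg_of_le hSnn hSB hBsum⟩
  have hGtsum : ∑' p, G p ≤ D₀ / (R - M₀) * ‖v‖ := by
    rw [Summable.tsum_sigma' hfib hGsum, ← hBtsum]
    exact Summable.tsum_le_tsum hSB (by
      simpa [hSdef] using ((summable_sigma_of_nonneg hGnn).mp hGsum).2) hBsum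
  have hcomp : (fun α => |g α|) = G ∘ E := by
    rw [hg, hG, hE]
    rfl
  have habs : Summable (fun α => |g α|) := by
    rw [hcomp]; exact (E.summable_iff (f := G)).mpr hGsum
  have hgsum : Summable g := habs.of_abs
  have habs' : Summable (fun α => ‖g α‖) := by simpa [Real.norm_eq_abs] using habs
  calc |∑' α, g α| ≤ ∑' α, |g α| := by
        simpa [Real.norm_eq_abs] using norm_tsum_le_tsum_norm (f := g) habs'
    _ = ∑' p, G p := by rw [hcomp]; exact E.tsum_eq G
    _ ≤ D₀ / (R - M₀) * ‖v‖ := hGtsum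

theorem stmt_8 (d : ℕ) (hd : 1 ≤ d) (t₀ T D₀ R M₀ : ℝ)
    (hD₀ : 0 < D₀) (hR : 0 < R) (hT : 0 ≤ T)
    (hM₀pos : 0 < M₀) (hM₀ : M₀ < R / Real.exp 1)
    (c : (Fin d → ℕ) → ℝ → Fin d → ℝ)
    (hzero : ∀ t, c 0 t = 0)
    (hdecay : ∀ k : ℕ, 1 ≤ k → ∀ t, t₀ ≤ t →
      ∑ j, ∑' α : {α : Fin d → ℕ // ∑ i, α i = k}, |c α.1 t j| ≤ D₀ / R ^ k)
    (x : ℝ → (Fin d → ℝ)) (x₀ : Fin d → ℝ)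
    (hx0 : x t₀ = x₀)
    (hode : ∀ t, t₀ ≤ t → HasDerivAt x
      (fun j => ∑' α : {α : Fin d → ℕ // 1 ≤ ∑ i, α i},
        c α.1 t j * ∏ i, (x t i) ^ (α.1 i)) t)
    (hbdd : ∀ t, t₀ ≤ t → t ≤ t₀ + T → ‖x t‖ ≤ M₀) :
    ∀ t, t₀ ≤ t → t ≤ t₀ + T →
      ‖x t‖ ≤ ‖x₀‖ * Real.exp (D₀ * (t - t₀) / (R - M₀)) := by
  have hexp1 : (1:ℝ) ≤ Real.exp 1 := by
    have := Real.exp_one_gt_d9; linarith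
  have hMR : M₀ < R := lt_of_lt_of_le hM₀ (div_le_self hR.le hexp1)
  have hRM : (0:ℝ) < R - M₀ := by linarith
  intro t ht1 ht2
  set f' : ℝ → Fin d → ℝ := fun s j => ∑' α : {α : Fin d → ℕ // 1 ≤ ∑ i, α i},
    c α.1 s j * ∏ i, (x s i) ^ (α.1 i) with hf'
  have hcont : ContinuousOn x (Set.Icc t₀ (t₀ + T)) :=
    fun s hs => ((hode s hs.1).continuousAt).continuousWithinAt
  have hderiv : ∀ s ∈ Set.Ico t₀ (t₀ + T), HasDerivWithinAt x (f' s) (Set.Ici s) s :=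
    fun s hs => ((hode s hs.1).hasDerivWithinAt)
  have hbound : ∀ s ∈ Set.Ico t₀ (t₀ + T), ‖f' s‖ ≤ (D₀ / (R - M₀)) * ‖x s‖ + 0 := by
    intro s hs
    rw [add_zero]
    have hxs : ‖x s‖ ≤ M₀ := hbdd s hs.1 hs.2.le
    rw [pi_norm_le_iff_of_nonneg (by positivity)]
    intro j
    rw [Real.norm_eq_abs]
    exact key_bound d t₀ D₀ R M₀ hD₀ hR hM₀pos hMR c hdecay s hs.1 (x s) hxs j
  have hδ : ‖x t₀‖ ≤ ‖x₀‖ := le_of_eq (by rw [hx0])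
  have hmain := norm_le_gronwallBound_of_norm_deriv_right_le hcont hderiv hδ hbound t ⟨ht1, ht2⟩
  rw [gronwallBound_ε0] at hmain
  calc ‖x t‖ ≤ ‖x₀‖ * Real.exp (D₀ / (R - M₀) * (t - t₀)) := hmain
    _ = ‖x₀‖ * Real.exp (D₀ * (t - t₀) / (R - M₀)) := by rw [div_mul_eq_mul_div]
end

section
/- Under Assumption 1 (sup_{t≥t_0} ∑_{j=1}^d ∑_{α∈Z_k^d} |f_{j,α}(t)| ≤ D₀ R^{-k} for all k ≥ 1), the Carleman block matrices satisfy sup_{t≥t_0} ‖A_{k,l}(t)‖_{S(Z_k^d, Z_l^d)} ≤ D₀ k R^{k-l-1} for all 1 ≤ k ≤ l, where ‖·‖_S denotes the Schur norm. -/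
open Finset

lemma finite_slice (d m : ℕ) : Finite {γ : Fin d → ℕ // ∑ i, γ i = m} := by
  have hlt : ∀ γ : {γ : Fin d → ℕ // ∑ i, γ i = m}, ∀ i, γ.1 i < m + 1 := by
    intro γ i
    exact Nat.lt_succ_of_le (le_trans
      (Finset.single_le_sum (fun i _ => Nat.zero_le _) (Finset.mem_univ i)) (le_of_eq γ.2))
  exact Finite.of_injective
    (fun γ => (fun i => ⟨γ.1 i, hlt γ i⟩ : Fin d → Fin (m + 1)))
    (by
      intro x y h
      apply Subtype.ext; funext i
      exact congrArg Fin.val (congrFun h i))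

lemma key_bound_s12 (d : ℕ) (c : Fin d → (Fin d → ℤ) → ℝ → ℝ)
    (hsupp : ∀ (j : Fin d) (γ : Fin d → ℤ) (t : ℝ),
      ¬ ((∀ i, 0 ≤ γ i) ∧ γ ≠ 0) → c j γ t = 0)
    (j : Fin d) (t : ℝ) (m w : ℕ)
    (ε : ℤ) (hε : ε = 1 ∨ ε = -1) (b : Fin d → ℤ)
    (hb : ε * w + ∑ i, b i = m)
    (S : Finset {x : Fin d → ℕ // ∑ i, x i = w}) :
    ∑ x ∈ S, |c j (fun i => ε * (x.1 i : ℤ) + b i) t|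
      ≤ ∑' γ : {γ : Fin d → ℕ // ∑ i, γ i = m}, |c j (fun i => (γ.1 i : ℤ)) t| := by
  classical
  haveI := finite_slice d m
  haveI : Fintype {γ : Fin d → ℕ // ∑ i, γ i = m} := Fintype.ofFinite _
  rw [tsum_fintype]
  set g : {x : Fin d → ℕ // ∑ i, x i = w} → Fin d → ℤ :=
    fun x i => ε * (x.1 i : ℤ) + b i with hg
  set P : {x : Fin d → ℕ // ∑ i, x i = w} → Prop := fun x => ∀ i, 0 ≤ g x i with hP
  have hε0 : ε ≠ 0 := by rcases hε with h | h <;> simp [h]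
  have hgsum : ∀ x : {x : Fin d → ℕ // ∑ i, x i = w}, ∑ i, g x i = m := by
    intro x
    have hx : ∑ i, ((x.1 i : ℤ)) = (w : ℤ) := by
      rw [← Nat.cast_sum, x.2]
    calc ∑ i, g x i = ∑ i, (ε * (x.1 i : ℤ) + b i) := rfl
      _ = ε * ∑ i, ((x.1 i : ℤ)) + ∑ i, b i := by
          rw [Finset.sum_add_distrib, Finset.mul_sum]
      _ = (m : ℤ) := by rw [hx, hb]
  -- kill the non-P part
  have hzero : ∀ x ∈ S, |c j (g x) t| ≠ 0 → P x := by
    intro x _ hne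
    by_contra hPx
    exact hne (by
      rw [hsupp j (g x) t (fun hcon => hPx fun i => hcon.1 i)]
      simp)
  rw [← Finset.sum_filter_of_ne hzero]
  set φ : {x : Fin d → ℕ // ∑ i, x i = w} → (Fin d → ℕ) :=
    fun x i => (g x i).toNat with hφ
  have hφsum : ∀ x, P x → ∑ i, φ x i = m := by
    intro x hPx
    have : ((∑ i, φ x i : ℕ) : ℤ) = (m : ℤ) := by
      rw [Nat.cast_sum]
      rw [Finset.sum_congr rfl (fun i _ => Int.toNat_of_nonneg (hPx i))]
      exact hgsum x
    exact_mod_cast this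
  have hinj : ∀ x ∈ S.filter P, ∀ y ∈ S.filter P, φ x = φ y → x = y := by
    intro x hx y hy h
    have hPx : P x := (Finset.mem_filter.mp hx).2
    have hPy : P y := (Finset.mem_filter.mp hy).2
    apply Subtype.ext; funext i
    have h1 : (g x i).toNat = (g y i).toNat := congrFun h i
    have h2 : g x i = g y i := by
      have := hPx i; have := hPy i; omega
    have h3 : ε * (x.1 i : ℤ) = ε * (y.1 i : ℤ) := by
      simpa [hg] using h2
    exact_mod_cast mul_left_cancel₀ hε0 h3
  calc ∑ x ∈ S.filter P, |c j (g x) t|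
      = ∑ x ∈ S.filter P, |c j (fun i => ((φ x i : ℕ) : ℤ)) t| := by
        refine Finset.sum_congr rfl (fun x hx => ?_)
        have hPx : P x := (Finset.mem_filter.mp hx).2
        have : (fun i => ((φ x i : ℕ) : ℤ)) = g x :=
          funext fun i => Int.toNat_of_nonneg (hPx i)
        rw [this]
    _ = ∑ y ∈ (S.filter P).image φ, |c j (fun i => ((y i : ℕ) : ℤ)) t| :=
        (Finset.sum_image (f := fun (y : Fin d → ℕ) => |c j (fun i => ((y i : ℕ) : ℤ)) t|) hinj).symm
    _ ≤ ∑ y ∈ Finset.univ.image (Subtype.val : {γ : Fin d → ℕ // ∑ i, γ i = m} → _),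
          |c j (fun i => ((y i : ℕ) : ℤ)) t| := by
        refine Finset.sum_le_sum_of_subset_of_nonneg ?_ (fun _ _ _ => abs_nonneg _)
        intro y hy
        obtain ⟨x, hx, rfl⟩ := Finset.mem_image.mp hy
        exact Finset.mem_image.mpr
          ⟨⟨φ x, hφsum x (Finset.mem_filter.mp hx).2⟩, Finset.mem_univ _, rfl⟩
    _ = ∑ γ : {γ : Fin d → ℕ // ∑ i, γ i = m}, |c j (fun i => (γ.1 i : ℤ)) t| :=
        Finset.sum_image (f := fun (y : Fin d → ℕ) => |c j (fun i => ((y i : ℕ) : ℤ)) t|) (fun x _ y _ h => Subtype.ext h)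
theorem stmt_12 (d : ℕ) (hd : 1 ≤ d) (t₀ D₀ R : ℝ) (hD₀ : 0 < D₀) (hR : 0 < R)
    (c : Fin d → (Fin d → ℤ) → ℝ → ℝ)
    (hsupp : ∀ (j : Fin d) (γ : Fin d → ℤ) (t : ℝ),
      ¬ ((∀ i, 0 ≤ γ i) ∧ γ ≠ 0) → c j γ t = 0)
    (hdecay : ∀ m : ℕ, 1 ≤ m → ∀ t, t₀ ≤ t →
      ∑ j, ∑' γ : {γ : Fin d → ℕ // ∑ i, γ i = m},
        |c j (fun i => (γ.1 i : ℤ)) t| ≤ D₀ / R ^ m)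
    (k l : ℕ) (hk : 1 ≤ k) (hkl : k ≤ l) (t : ℝ) (ht : t₀ ≤ t) :
    (∀ α : Fin d → ℕ, ∑ i, α i = k →
      ∑' β : {β : Fin d → ℕ // ∑ i, β i = l},
        |∑ j, (α j : ℝ) *
          c j (fun i => (β.1 i : ℤ) - (α i : ℤ) + if i = j then 1 else 0) t|
        ≤ D₀ * k * R ^ ((k : ℤ) - l - 1)) ∧
    (∀ β : Fin d → ℕ, ∑ i, β i = l →
      ∑' α : {α : Fin d → ℕ // ∑ i, α i = k},
        |∑ j, (α.1 j : ℝ) *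
          c j (fun i => (β i : ℤ) - (α.1 i : ℤ) + if i = j then 1 else 0) t|
        ≤ D₀ * k * R ^ ((k : ℤ) - l - 1)) := by
  classical
  set m : ℕ := l + 1 - k with hm_def
  have hm : 1 ≤ m := by omega
  have hmz : (k : ℤ) - l - 1 = -(m : ℤ) := by omega
  -- the total decay bound
  set T : Fin d → ℝ := fun j =>
    ∑' γ : {γ : Fin d → ℕ // ∑ i, γ i = m}, |c j (fun i => (γ.1 i : ℤ)) t| with hT
  have hTnonneg : ∀ j, 0 ≤ T j := fun j => tsum_nonneg (fun _ => abs_nonneg _)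
  have hTtot : ∑ j, T j ≤ D₀ / R ^ m := hdecay m hm t ht
  have hTj : ∀ j, T j ≤ D₀ / R ^ m := by
    intro j
    exact le_trans (Finset.single_le_sum (fun i _ => hTnonneg i) (Finset.mem_univ j)) hTtot
  have hRHS : D₀ * k * R ^ ((k : ℤ) - l - 1) = (k : ℝ) * (D₀ / R ^ m) := by
    rw [hmz, zpow_neg, zpow_natCast, div_eq_mul_inv]
    ring
  haveI := finite_slice d l
  haveI := finite_slice d k
  haveI : Fintype {γ : Fin d → ℕ // ∑ i, γ i = l} := Fintype.ofFinite _
  haveI : Fintype {γ : Fin d → ℕ // ∑ i, γ i = k} := Fintype.ofFinite _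
  constructor
  · intro α hα
    rw [tsum_fintype, hRHS]
    have hαz : ∑ i, ((α i : ℤ)) = (k : ℤ) := by rw [← Nat.cast_sum, hα]
    calc ∑ β : {β : Fin d → ℕ // ∑ i, β i = l},
          |∑ j, (α j : ℝ) *
            c j (fun i => (β.1 i : ℤ) - (α i : ℤ) + if i = j then 1 else 0) t|
        ≤ ∑ β : {β : Fin d → ℕ // ∑ i, β i = l}, ∑ j, (α j : ℝ) *
            |c j (fun i => (β.1 i : ℤ) - (α i : ℤ) + if i = j then 1 else 0) t| := by
          refine Finset.sum_le_sum (fun β _ => ?_)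
          refine le_trans (Finset.abs_sum_le_sum_abs _ _) (le_of_eq ?_)
          refine Finset.sum_congr rfl (fun j _ => ?_)
          rw [abs_mul, Nat.abs_cast]
      _ = ∑ j, (α j : ℝ) * ∑ β : {β : Fin d → ℕ // ∑ i, β i = l},
            |c j (fun i => (β.1 i : ℤ) - (α i : ℤ) + if i = j then 1 else 0) t| := by
          rw [Finset.sum_comm]
          exact Finset.sum_congr rfl (fun j _ => (Finset.mul_sum _ _ _).symm)
      _ ≤ ∑ j, (α j : ℝ) * T j := by
          refine Finset.sum_le_sum (fun j _ => ?_)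
          refine mul_le_mul_of_nonneg_left ?_ (Nat.cast_nonneg _)
          have hkey := key_bound_s12 d c hsupp j t m l 1 (Or.inl rfl)
            (fun i => (if i = j then 1 else 0) - (α i : ℤ))
            (by
              rw [Finset.sum_sub_distrib, Finset.sum_ite_eq' Finset.univ j (fun _ => (1 : ℤ))]
              simp only [Finset.mem_univ, if_true]
              rw [hαz]; omega)
            Finset.univ
          refine le_trans (le_of_eq ?_) hkey
          refine Finset.sum_congr rfl (fun β _ => ?_)
          have harg : (fun i => (β.1 i : ℤ) - (α i : ℤ) + if i = j then 1 else 0)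
              = (fun i => 1 * (β.1 i : ℤ) + ((if i = j then 1 else 0) - (α i : ℤ))) := by
            funext i; ring
          rw [harg]
      _ ≤ ∑ j, (α j : ℝ) * ∑ j', T j' := by
          refine Finset.sum_le_sum (fun j _ => ?_)
          exact mul_le_mul_of_nonneg_left
            (Finset.single_le_sum (fun i _ => hTnonneg i) (Finset.mem_univ j))
            (Nat.cast_nonneg _)
      _ = (k : ℝ) * ∑ j', T j' := by
          rw [← Finset.sum_mul, ← Nat.cast_sum, hα]
      _ ≤ (k : ℝ) * (D₀ / R ^ m) :=
          mul_le_mul_of_nonneg_left hTtot (Nat.cast_nonneg _)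
  · intro β hβ
    rw [tsum_fintype, hRHS]
    have hαk : ∀ (α : {α : Fin d → ℕ // ∑ i, α i = k}) (j : Fin d), α.1 j ≤ k := by
      intro α j
      exact le_trans (Finset.single_le_sum (fun i _ => Nat.zero_le _) (Finset.mem_univ j))
        (le_of_eq α.2)
    calc ∑ α : {α : Fin d → ℕ // ∑ i, α i = k},
          |∑ j, (α.1 j : ℝ) *
            c j (fun i => (β i : ℤ) - (α.1 i : ℤ) + if i = j then 1 else 0) t|
        ≤ ∑ α : {α : Fin d → ℕ // ∑ i, α i = k}, ∑ j, (k : ℝ) *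
            |c j (fun i => (β i : ℤ) - (α.1 i : ℤ) + if i = j then 1 else 0) t| := by
          refine Finset.sum_le_sum (fun α _ => ?_)
          refine le_trans (Finset.abs_sum_le_sum_abs _ _) ?_
          refine Finset.sum_le_sum (fun j _ => ?_)
          rw [abs_mul, Nat.abs_cast]
          exact mul_le_mul_of_nonneg_right (by exact_mod_cast hαk α j) (abs_nonneg _)
      _ = ∑ j, (k : ℝ) * ∑ α : {α : Fin d → ℕ // ∑ i, α i = k},
            |c j (fun i => (β i : ℤ) - (α.1 i : ℤ) + if i = j then 1 else 0) t| := by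
          rw [Finset.sum_comm]
          exact Finset.sum_congr rfl (fun j _ => (Finset.mul_sum _ _ _).symm)
      _ ≤ ∑ j, (k : ℝ) * T j := by
          refine Finset.sum_le_sum (fun j _ => ?_)
          refine mul_le_mul_of_nonneg_left ?_ (Nat.cast_nonneg _)
          have hβz : ∑ i, ((β i : ℤ)) = (l : ℤ) := by rw [← Nat.cast_sum, hβ]
          have hkey := key_bound_s12 d c hsupp j t m k (-1) (Or.inr rfl)
            (fun i => (β i : ℤ) + (if i = j then 1 else 0))
            (by
              rw [Finset.sum_add_distrib, Finset.sum_ite_eq' Finset.univ j (fun _ => (1 : ℤ))]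
              simp only [Finset.mem_univ, if_true]
              rw [hβz]; omega)
            Finset.univ
          refine le_trans (le_of_eq ?_) hkey
          refine Finset.sum_congr rfl (fun α _ => ?_)
          have harg : (fun i => (β i : ℤ) - (α.1 i : ℤ) + if i = j then 1 else 0)
              = (fun i => -1 * (α.1 i : ℤ) + ((β i : ℤ) + if i = j then 1 else 0)) := by
            funext i; ring
          rw [harg]
      _ = (k : ℝ) * ∑ j, T j := by rw [← Finset.mul_sum]
      _ ≤ (k : ℝ) * (D₀ / R ^ m) :=
          mul_le_mul_of_nonneg_left hTtot (Nat.cast_nonneg _)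
end

section
/- If additionally the zeroth-order coefficients satisfy sup_{t≥t_0} ∑_{j=1}^d |f_{j,0}(t)| ≤ ν₀, then the sub-diagonal Carleman blocks satisfy sup_{t≥t_0} ‖A_{k+1,k}(t)‖_{S(Z_{k+1}^d, Z_k^d)} ≤ ν₀ (k+1) for all k ≥ 1, and A_{k,l}(t) = 0 for 1 ≤ l < k-1. -/
open Finset

lemma aux_ind {X : Type*} (s : Finset X) (p : X → Prop) [DecidablePred p]
    (hp : ∀ x y, p x → p y → x = y) (M : ℝ) (hM : 0 ≤ M) :
    ∑ x ∈ s, (if p x then M else 0) ≤ M := by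
  classical
  rw [← Finset.sum_filter, Finset.sum_const, nsmul_eq_mul]
  have hcard : (s.filter p).card ≤ 1 := by
    apply Finset.card_le_one.2
    intro a ha b hb
    simp only [Finset.mem_filter] at ha hb
    exact hp a b ha.2 hb.2
  calc ((s.filter p).card : ℝ) * M ≤ 1 * M := by
        exact mul_le_mul_of_nonneg_right (by exact_mod_cast hcard) hM
    _ = M := one_mul M

lemma aux_pt (d : ℕ) (c : Fin d → (Fin d → ℤ) → ℝ → ℝ)
    (hsupp : ∀ (j : Fin d) (γ : Fin d → ℤ) (t : ℝ),
      ¬ (∀ i, 0 ≤ γ i) → c j γ t = 0)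
    (k : ℕ) (t : ℝ) (α β : Fin d → ℕ)
    (hα : ∑ i, α i = k + 1) (hβ : ∑ i, β i = k) :
    |∑ j, (α j : ℝ) * c j (fun i => (β i : ℤ) - (α i : ℤ) + if i = j then 1 else 0) t|
      ≤ ∑ j, if (∀ i, α i = β i + if i = j then 1 else 0) then ((k : ℝ) + 1) * |c j 0 t| else 0 := by
  classical
  refine (Finset.abs_sum_le_sum_abs _ _).trans (Finset.sum_le_sum ?_)
  intro j _
  by_cases h : ∀ i, α i = β i + if i = j then 1 else 0
  · rw [if_pos h]
    have hγ : (fun i => (β i : ℤ) - (α i : ℤ) + if i = j then 1 else 0) = 0 := by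
      funext i
      have h1 : (α i : ℤ) = (β i : ℤ) + if i = j then 1 else 0 := by
        rw [h i]; push_cast; split <;> simp
      simp only [Pi.zero_apply]; rw [h1]; ring
    rw [hγ, abs_mul, abs_of_nonneg (by positivity : (0:ℝ) ≤ (α j : ℝ))]
    have hαj : (α j : ℝ) ≤ (k : ℝ) + 1 := by
      have : α j ≤ k + 1 := hα ▸ Finset.single_le_sum (fun i _ => Nat.zero_le _) (Finset.mem_univ j)
      exact_mod_cast this
    exact mul_le_mul_of_nonneg_right hαj (abs_nonneg _)
  · rw [if_neg h]
    have hc : c j (fun i => (β i : ℤ) - (α i : ℤ) + if i = j then 1 else 0) t = 0 := by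
      apply hsupp
      intro h0
      apply h
      intro i
      have hsum : ∑ i, ((β i : ℤ) - (α i : ℤ) + if i = j then 1 else 0) = 0 := by
        rw [Finset.sum_add_distrib, Finset.sum_sub_distrib]
        have e1 : ∑ i, ((if i = j then (1:ℤ) else 0)) = 1 := by simp
        rw [e1]
        have e2 : ∑ i, (β i : ℤ) = (k : ℤ) := by rw [← Nat.cast_sum, hβ]
        have e3 : ∑ i, (α i : ℤ) = (k : ℤ) + 1 := by rw [← Nat.cast_sum, hα]; push_cast; ring
        rw [e2, e3]; ring
      have hall : ∀ i ∈ Finset.univ, ((β i : ℤ) - (α i : ℤ) + if i = j then 1 else 0) = 0 :=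
        (Finset.sum_eq_zero_iff_of_nonneg (fun i _ => h0 i)).1 hsum
      have := hall i (Finset.mem_univ i)
      have h2 : (α i : ℤ) = (β i : ℤ) + if i = j then 1 else 0 := by linarith
      have h3 : (α i : ℤ) = ((β i + if i = j then 1 else 0 : ℕ) : ℤ) := by
        rw [h2]; push_cast; split <;> simp
      exact_mod_cast h3
    rw [hc, mul_zero, abs_zero]
theorem stmt_13 (d : ℕ) (hd : 1 ≤ d) (t₀ ν₀ : ℝ) (hν₀ : 0 ≤ ν₀)
    (c : Fin d → (Fin d → ℤ) → ℝ → ℝ)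
    (hsupp : ∀ (j : Fin d) (γ : Fin d → ℤ) (t : ℝ),
      ¬ (∀ i, 0 ≤ γ i) → c j γ t = 0)
    (hν : ∀ t, t₀ ≤ t → ∑ j, |c j 0 t| ≤ ν₀) :
    (∀ k : ℕ, 1 ≤ k → ∀ t, t₀ ≤ t →
      (∀ α : Fin d → ℕ, ∑ i, α i = k + 1 →
        ∑' β : {β : Fin d → ℕ // ∑ i, β i = k},
          |∑ j, (α j : ℝ) *
            c j (fun i => (β.1 i : ℤ) - (α i : ℤ) + if i = j then 1 else 0) t|
          ≤ ν₀ * (k + 1)) ∧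
      (∀ β : Fin d → ℕ, ∑ i, β i = k →
        ∑' α : {α : Fin d → ℕ // ∑ i, α i = k + 1},
          |∑ j, (α.1 j : ℝ) *
            c j (fun i => (β i : ℤ) - (α.1 i : ℤ) + if i = j then 1 else 0) t|
          ≤ ν₀ * (k + 1))) ∧
    (∀ k l : ℕ, 1 ≤ l → l + 1 < k → ∀ t : ℝ,
      ∀ α β : Fin d → ℕ, ∑ i, α i = k → ∑ i, β i = l →
        ∑ j, (α j : ℝ) *
          c j (fun i => (β i : ℤ) - (α i : ℤ) + if i = j then 1 else 0) t = 0) := by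
  classical
  have hbound : ∀ t, t₀ ≤ t → ∀ k : ℕ, ∑ j, ((k : ℝ) + 1) * |c j 0 t| ≤ ν₀ * (k + 1) := by
    intro t ht k
    rw [← Finset.mul_sum]
    calc ((k : ℝ) + 1) * ∑ j, |c j 0 t| ≤ ((k : ℝ) + 1) * ν₀ :=
          mul_le_mul_of_nonneg_left (hν t ht) (by positivity)
      _ = ν₀ * (k + 1) := by ring
  constructor
  · intro k _hk t ht
    constructor
    · intro α hα
      apply tsum_le_of_sum_le' (by positivity)
      intro s
      calc ∑ β ∈ s, |∑ j, (α j : ℝ) *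
              c j (fun i => (β.1 i : ℤ) - (α i : ℤ) + if i = j then 1 else 0) t|
          ≤ ∑ β ∈ s, ∑ j, (if (∀ i, α i = β.1 i + if i = j then 1 else 0)
              then ((k : ℝ) + 1) * |c j 0 t| else 0) :=
            Finset.sum_le_sum (fun β _ => aux_pt d c hsupp k t α β.1 hα β.2)
        _ = ∑ j, ∑ β ∈ s, (if (∀ i, α i = β.1 i + if i = j then 1 else 0)
              then ((k : ℝ) + 1) * |c j 0 t| else 0) := Finset.sum_comm
        _ ≤ ∑ j, ((k : ℝ) + 1) * |c j 0 t| := by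
            apply Finset.sum_le_sum
            intro j _
            apply aux_ind
            · intro x y hx hy
              apply Subtype.ext
              funext i
              have := (hx i).symm.trans (hy i)
              omega
            · positivity
        _ ≤ ν₀ * (k + 1) := hbound t ht k
    · intro β hβ
      apply tsum_le_of_sum_le' (by positivity)
      intro s
      calc ∑ α ∈ s, |∑ j, (α.1 j : ℝ) *
              c j (fun i => (β i : ℤ) - (α.1 i : ℤ) + if i = j then 1 else 0) t|
          ≤ ∑ α ∈ s, ∑ j, (if (∀ i, α.1 i = β i + if i = j then 1 else 0)
              then ((k : ℝ) + 1) * |c j 0 t| else 0) :=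
            Finset.sum_le_sum (fun α _ => aux_pt d c hsupp k t α.1 β α.2 hβ)
        _ = ∑ j, ∑ α ∈ s, (if (∀ i, α.1 i = β i + if i = j then 1 else 0)
              then ((k : ℝ) + 1) * |c j 0 t| else 0) := Finset.sum_comm
        _ ≤ ∑ j, ((k : ℝ) + 1) * |c j 0 t| := by
            apply Finset.sum_le_sum
            intro j _
            apply aux_ind
            · intro x y hx hy
              apply Subtype.ext
              funext i
              have := (hx i).trans (hy i).symm
              omega
            · positivity
        _ ≤ ν₀ * (k + 1) := hbound t ht k
  · intro k l _hl hlk t α β hα hβ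
    apply Finset.sum_eq_zero
    intro j _
    have hc : c j (fun i => (β i : ℤ) - (α i : ℤ) + if i = j then 1 else 0) t = 0 := by
      apply hsupp
      intro h0
      have hsum : ∑ i, ((β i : ℤ) - (α i : ℤ) + if i = j then 1 else 0) = (l : ℤ) - k + 1 := by
        rw [Finset.sum_add_distrib, Finset.sum_sub_distrib]
        have e1 : ∑ i, ((if i = j then (1:ℤ) else 0)) = 1 := by simp
        have e2 : ∑ i, (β i : ℤ) = (l : ℤ) := by rw [← Nat.cast_sum, hβ]
        have e3 : ∑ i, (α i : ℤ) = (k : ℤ) := by rw [← Nat.cast_sum, hα]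
        rw [e1, e2, e3]
      have hpos : (0:ℤ) ≤ ∑ i, ((β i : ℤ) - (α i : ℤ) + if i = j then 1 else 0) :=
        Finset.sum_nonneg (fun i _ => h0 i)
      rw [hsum] at hpos
      omega
    rw [hc, mul_zero]
end
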